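/- The query computing the variance of n real values each normalized to lie in [0,1] has global sensitivity at most 1/n with respect to changing one of the n values. -/
import Mathlib


/-- the variance of n values in [0,1] has global sensitivity at most
1/n when a single value is changed. -/
theorem variance_global_sensitivity
    {n : ℕ} (hn : 0 < n) (a a' : Fin n → ℝ)
    (ha : ∀ i, a i ∈ Set.Icc (0 : ℝ) 1) (ha' : ∀ i, a' i ∈ Set.Icc (0 : ℝ) 1)
    (i₀ : Fin n) (hdiff : ∀ j, j ≠ i₀ → a j = a' j) :
    |(1 / (n : ℝ) * ∑ i, (a i - 1 / (n : ℝ) * ∑ l, a l) ^ 2) -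
        (1 / (n : ℝ) * ∑ i, (a' i - 1 / (n : ℝ) * ∑ l, a' l) ^ 2)| ≤ 1 / (n : ℝ) := by
  set m : ℝ := (n : ℝ) with hmdef
  have hm1 : 1 ≤ m := by exact_mod_cast Nat.one_le_cast.mpr hn
  have hm0 : 0 < m := by linarith
  set x := a i₀
  set y := a' i₀
  set S := ∑ j ∈ Finset.univ.erase i₀, a j with hSdef
  -- sums over erase agree
  have herase : ∑ j ∈ Finset.univ.erase i₀, a' j = S := by
    refine Finset.sum_congr rfl fun j hj => ?_
    exact (hdiff j (Finset.ne_of_mem_erase hj)).symm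
  have hs : ∑ l, a l = S + x := by
    rw [hSdef, Finset.sum_erase_add _ _ (Finset.mem_univ i₀)]
  have hs' : ∑ l, a' l = S + y := by
    rw [← herase, Finset.sum_erase_add _ _ (Finset.mem_univ i₀)]
  -- sum of squares difference
  have hQ : ∑ i, (a' i) ^ 2 = (∑ i, (a i) ^ 2) - (x ^ 2 - y ^ 2) := by
    rw [← Finset.sum_erase_add _ _ (Finset.mem_univ i₀),
        ← Finset.sum_erase_add _ (fun i => (a i) ^ 2) (Finset.mem_univ i₀)]
    have : ∑ j ∈ Finset.univ.erase i₀, (a' j) ^ 2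
        = ∑ j ∈ Finset.univ.erase i₀, (a j) ^ 2 := by
      refine Finset.sum_congr rfl fun j hj => ?_
      rw [hdiff j (Finset.ne_of_mem_erase hj)]
    rw [this]; ring
  -- variance identity
  have hvar : ∀ b : Fin n → ℝ,
      ∑ i, (b i - 1 / m * ∑ l, b l) ^ 2 = (∑ i, (b i) ^ 2) - (∑ l, b l) ^ 2 / m := by
    intro b
    have hexp : ∀ i : Fin n, (b i - 1 / m * ∑ l, b l) ^ 2
        = (b i) ^ 2 - (2 / m * ∑ l, b l) * b i + (1 / m * ∑ l, b l) ^ 2 := by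
      intro i; field_simp; ring
    rw [Finset.sum_congr rfl fun i _ => hexp i]
    rw [Finset.sum_add_distrib, Finset.sum_sub_distrib, ← Finset.mul_sum,
      Finset.sum_const, Finset.card_univ, Fintype.card_fin, nsmul_eq_mul]
    field_simp
    ring
  rw [hvar a, hvar a', hQ, hs, hs']
  -- bounds
  have hx0 : 0 ≤ x := (ha i₀).1
  have hx1 : x ≤ 1 := (ha i₀).2
  have hy0 : 0 ≤ y := (ha' i₀).1
  have hy1 : y ≤ 1 := (ha' i₀).2
  have hS0 : 0 ≤ S := Finset.sum_nonneg fun j _ => (ha j).1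
  have hS1 : S ≤ m - 1 := by
    have h := Finset.sum_le_card_nsmul (Finset.univ.erase i₀) a 1 fun j _ => (ha j).2
    rw [Finset.card_erase_of_mem (Finset.mem_univ i₀), Finset.card_univ,
      Fintype.card_fin, nsmul_eq_mul, mul_one] at h
    calc S ≤ ((n - 1 : ℕ) : ℝ) := h
      _ = m - 1 := by rw [Nat.cast_sub hn]; simp [hmdef]
  have key : |(x - y) * ((m - 1) * (x + y) - 2 * S)| ≤ m := by
    have h0 : |x ^ 2 - y ^ 2| ≤ 1 := abs_le.2 ⟨by nlinarith, by nlinarith⟩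
    have h1 : |(x - y) * (x + y - 2)| ≤ 1 := abs_le.2 ⟨by nlinarith, by nlinarith⟩
    calc |(x - y) * ((m - 1) * (x + y) - 2 * S)|
        = |(m - 1 - S) * (x ^ 2 - y ^ 2) + S * ((x - y) * (x + y - 2))| := by ring_nf
      _ ≤ |(m - 1 - S) * (x ^ 2 - y ^ 2)| + |S * ((x - y) * (x + y - 2))| := abs_add_le _ _
      _ = (m - 1 - S) * |x ^ 2 - y ^ 2| + S * |(x - y) * (x + y - 2)| := by
          rw [abs_mul, abs_mul, abs_of_nonneg (by linarith : (0:ℝ) ≤ m - 1 - S),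
            abs_of_nonneg hS0]
      _ ≤ (m - 1 - S) * 1 + S * 1 :=
          add_le_add (mul_le_mul_of_nonneg_left h0 (by linarith))
            (mul_le_mul_of_nonneg_left h1 hS0)
      _ ≤ m := by linarith
  have hexp2 : (1 / m * ((∑ i, (a i) ^ 2) - (S + x) ^ 2 / m)) -
      (1 / m * (((∑ i, (a i) ^ 2) - (x ^ 2 - y ^ 2)) - (S + y) ^ 2 / m))
      = (x - y) * ((m - 1) * (x + y) - 2 * S) / m ^ 2 := by
    field_simp
    ring
  rw [hexp2, abs_div, abs_of_nonneg (sq_nonneg m)]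
  rw [div_le_div_iff₀ (by positivity) hm0]
  nlinarith [key]
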